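/- Let q ∈ MvPolynomial (Fin n) (ZMod 2) be a quadratic form. Let e ∈ ℕ, let s be a nonempty finite set of natural numbers, and let f : ℕ → ℕ satisfy f i ≥ 1 for every i ∈ s. Then q^e · ∏_{i ∈ s} (D_i q)^(f i) = 0 if and only if there exists a linear form ℓ with q = ℓ². (This computes the kernel of the natural transformation S²(V♯) → S^p(V♯) induced by any nontrivial monomial in the generators ι₂, Q_i(ι₂) of H*(K(F₂,2)) that involves at least one Milnor operation Q_i: the kernel consists exactly of the squares of linear forms, i.e. the subfunctor generated by ⟨u²⟩.) -/

import Mathlib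

open MvPolynomial

/-- The Milnor operation `Q_i` acting on `F₂[x₁,…,xₙ]` as the `F₂`-linear derivation
with `D_i (x_j) = x_j ^ (2^(i+1))`. -/
noncomputable def milnorQ (n i : ℕ) :
    Derivation (ZMod 2) (MvPolynomial (Fin n) (ZMod 2)) (MvPolynomial (Fin n) (ZMod 2)) :=
  MvPolynomial.mkDerivation (ZMod 2) fun j => X j ^ 2 ^ (i + 1)

lemma degree_single (σ : Type*) (j : σ) (k : ℕ) :
    (Finsupp.single j k).degree = k := by
  classical
  rcases eq_or_ne k 0 with rfl | hk
  · simp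
  · rw [Finsupp.degree_apply, Finsupp.support_single_ne_zero _ hk, Finset.sum_singleton,
      Finsupp.single_eq_same]

lemma degree_add (σ : Type*) (a b : σ →₀ ℕ) :
    (a + b).degree = a.degree + b.degree := by
  simp only [Finsupp.degree_eq_weight_one, map_add]

/-- classification of monomials of degree 2 -/
lemma degree_two_classify {σ : Type*} (m : σ →₀ ℕ) (h : m.degree = 2) :
    (∃ j, m = Finsupp.single j 2) ∨
      ∃ j k, j ≠ k ∧ m = Finsupp.single j 1 + Finsupp.single k 1 := by
  classical
  have hsum : ∑ i ∈ m.support, m i = 2 := h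
  have hne : m.support.Nonempty := by
    rw [Finset.nonempty_iff_ne_empty]
    intro he
    rw [he] at hsum; simp at hsum
  obtain ⟨j, hj⟩ := hne
  have hj1 : 1 ≤ m j := Nat.one_le_iff_ne_zero.2 (Finsupp.mem_support_iff.1 hj)
  have hj2 : m j ≤ 2 := hsum ▸ Finset.single_le_sum (fun i _ => Nat.zero_le _) hj
  have hrest : ∑ i ∈ m.support.erase j, m i = 2 - m j := by
    have := Finset.add_sum_erase _ m hj
    omega
  interval_cases hmj : m j
  · -- m j = 1 : cross case
    right
    have hrest1 : ∑ i ∈ m.support.erase j, m i = 1 := by omega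
    have hne2 : (m.support.erase j).Nonempty := by
      rw [Finset.nonempty_iff_ne_empty]
      intro he
      rw [he] at hrest1; simp at hrest1
    obtain ⟨k, hk⟩ := hne2
    have hkj : k ≠ j := Finset.ne_of_mem_erase hk
    have hk1 : 1 ≤ m k := Nat.one_le_iff_ne_zero.2
      (Finsupp.mem_support_iff.1 (Finset.mem_of_mem_erase hk))
    have hk2 : m k ≤ 1 := hrest1 ▸ Finset.single_le_sum (fun i _ => Nat.zero_le _) hk
    have hmk : m k = 1 := le_antisymm hk2 hk1
    have hzero : ∀ i ∈ (m.support.erase j).erase k, m i = 0 := by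
      have := Finset.add_sum_erase _ m hk
      intro i hi
      have h1 : ∑ x ∈ (m.support.erase j).erase k, m x = 0 := by omega
      exact Finset.sum_eq_zero_iff.1 h1 i hi
    refine ⟨j, k, hkj.symm, ?_⟩
    ext i
    rcases eq_or_ne i j with rfl | hij
    · simp [hmj, Finsupp.single_eq_of_ne' hkj]
    rcases eq_or_ne i k with rfl | hik
    · simp [hmk, Finsupp.single_eq_of_ne' (fun h => hij h.symm)]
    · by_cases hi : i ∈ m.support
      · have : i ∈ (m.support.erase j).erase k := by
          exact Finset.mem_erase.2 ⟨hik, Finset.mem_erase.2 ⟨hij, hi⟩⟩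
        simp [hzero i this, Finsupp.single_eq_of_ne' (fun h => hij h.symm),
          Finsupp.single_eq_of_ne' (fun h => hik h.symm)]
      · simp only [Finsupp.notMem_support_iff] at hi
        simp [hi, Finsupp.single_eq_of_ne' (fun h => hij h.symm),
          Finsupp.single_eq_of_ne' (fun h => hik h.symm)]
  · -- m j = 2 : square case
    left
    refine ⟨j, ?_⟩
    have hzero : ∀ i ∈ m.support.erase j, m i = 0 := by
      intro i hi
      have h1 : ∑ x ∈ m.support.erase j, m x = 0 := by omega
      exact Finset.sum_eq_zero_iff.1 h1 i hi
    ext i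
    rcases eq_or_ne i j with rfl | hij
    · simp [hmj]
    · by_cases hi : i ∈ m.support
      · simp [hzero i (Finset.mem_erase.2 ⟨hij, hi⟩),
          Finsupp.single_eq_of_ne' (fun h => hij h.symm)]
      · simp only [Finsupp.notMem_support_iff] at hi
        simp [hi, Finsupp.single_eq_of_ne' (fun h => hij h.symm)]

/-- key coefficient computation: the coefficient of `x_j^N x_k` in `D q`
equals the coefficient of `x_j x_k` in `q`. -/
lemma coeff_milnorQ {n i : ℕ} (q : MvPolynomial (Fin n) (ZMod 2)) {j k : Fin n}
    (hjk : j ≠ k) :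
    coeff (Finsupp.single j (2 ^ (i + 1)) + Finsupp.single k 1) (milnorQ n i q) =
      coeff (Finsupp.single j 1 + Finsupp.single k 1) q := by
  classical
  set N : ℕ := 2 ^ (i + 1) with hN
  have hN2 : 2 ≤ N := by
    calc 2 = 2 ^ 1 := by norm_num
    _ ≤ 2 ^ (i + 1) := Nat.pow_le_pow_right (by norm_num) (by omega)
  set M : Fin n →₀ ℕ := Finsupp.single j N + Finsupp.single k 1 with hM
  -- expand q as a sum of monomials
  conv_lhs => rw [q.as_sum]
  rw [map_sum, coeff_sum]
  have hterm : ∀ m : Fin n →₀ ℕ,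
      coeff M (milnorQ n i (monomial m (coeff m q))) =
        if m = Finsupp.single j 1 + Finsupp.single k 1 then coeff m q else 0 := by
    intro m
    rw [milnorQ, mkDerivation_monomial]
    rw [coeff_smul, Finsupp.sum, coeff_sum]
    have hsub : ∀ a ∈ m.support,
        coeff M ((monomial (m - Finsupp.single a 1) ((m a : ZMod 2))) • (X a ^ N : MvPolynomial (Fin n) (ZMod 2))) =
          if a = j ∧ m = Finsupp.single j 1 + Finsupp.single k 1 then (m a : ZMod 2) else 0 := by
      intro a ha
      have hma : 1 ≤ m a := Nat.one_le_iff_ne_zero.2 (Finsupp.mem_support_iff.1 ha)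
      rw [smul_eq_mul, X_pow_eq_monomial, monomial_mul, mul_one, coeff_monomial]
      have hiff : (m - Finsupp.single a 1 + Finsupp.single a N = M) ↔
          (a = j ∧ m = Finsupp.single j 1 + Finsupp.single k 1) := by
        constructor
        · intro he
          have haj : a = j := by
            by_contra haj
            have h0 := DFunLike.congr_fun he a
            rcases eq_or_ne k a with rfl | hak
            · simp only [hM, Finsupp.add_apply, Finsupp.tsub_apply, Finsupp.single_eq_same,
                Finsupp.single_eq_of_ne' (fun h => haj h.symm)] at h0
              omega
            · simp only [hM, Finsupp.add_apply, Finsupp.tsub_apply, Finsupp.single_eq_same,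
                Finsupp.single_eq_of_ne' (fun h => haj h.symm),
                Finsupp.single_eq_of_ne' hak] at h0
              omega
          subst haj
          refine ⟨rfl, ?_⟩
          ext b
          have h0 := DFunLike.congr_fun he b
          rcases eq_or_ne b a with rfl | hbj
          · simp only [hM, Finsupp.add_apply, Finsupp.tsub_apply, Finsupp.single_eq_same,
              Finsupp.single_eq_of_ne' hjk] at h0 ⊢
            omega
          · rcases eq_or_ne b k with rfl | hbk
            · simp only [hM, Finsupp.add_apply, Finsupp.tsub_apply, Finsupp.single_eq_same,
                Finsupp.single_eq_of_ne' (Ne.symm hbj)] at h0 ⊢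
              omega
            · simp only [hM, Finsupp.add_apply, Finsupp.tsub_apply,
                Finsupp.single_eq_of_ne' (Ne.symm hbj),
                Finsupp.single_eq_of_ne' (Ne.symm hbk)] at h0 ⊢
              omega
        · rintro ⟨rfl, rfl⟩
          rw [add_tsub_cancel_left, hM, add_comm]
      by_cases hc : m - Finsupp.single a 1 + Finsupp.single a N = M
      · rw [if_pos hc, if_pos (hiff.1 hc)]
      · rw [if_neg hc, if_neg (fun h => hc (hiff.2 h))]
    rw [Finset.sum_congr rfl hsub]
    by_cases hm : m = Finsupp.single j 1 + Finsupp.single k 1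
    · subst hm
      rw [if_pos rfl]
      have hjmem : j ∈ (Finsupp.single j 1 + Finsupp.single k 1).support := by
        simp [Finsupp.mem_support_iff, Finsupp.single_apply, Ne.symm hjk]
      rw [Finset.sum_eq_single_of_mem j hjmem]
      · simp [Finsupp.single_apply, hjk, Ne.symm hjk, smul_eq_mul]
      · intro b _ hb
        rw [if_neg (fun h => hb h.1)]
    · rw [if_neg hm]
      rw [Finset.sum_eq_zero, smul_zero]
      intro a _
      rw [if_neg (fun h => hm h.2)]
  rw [Finset.sum_congr rfl (fun m _ => hterm m)]
  rw [Finset.sum_ite_eq' q.support]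
  by_cases h : Finsupp.single j 1 + Finsupp.single k 1 ∈ q.support
  · rw [if_pos h]
  · rw [if_neg h]
    rw [MvPolynomial.notMem_support_iff] at h
    exact h.symm

/-- squares of linear forms are killed by the Milnor operations -/
lemma milnorQ_sq (n i : ℕ) (ℓ : MvPolynomial (Fin n) (ZMod 2)) :
    milnorQ n i (ℓ ^ 2) = 0 := by
  rw [pow_two, Derivation.leibniz]
  exact CharTwo.add_self_eq_zero _

/-- core lemma: a quadratic form killed by some Milnor operation is the square
of a linear form -/
lemma core {n i : ℕ} (q : MvPolynomial (Fin n) (ZMod 2)) (hq : q.IsHomogeneous 2)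
    (hD : milnorQ n i q = 0) :
    ∃ ℓ : MvPolynomial (Fin n) (ZMod 2), ℓ.IsHomogeneous 1 ∧ q = ℓ ^ 2 := by
  classical
  have hcross : ∀ j k : Fin n, j ≠ k →
      coeff (Finsupp.single j 1 + Finsupp.single k 1) q = 0 := by
    intro j k hjk
    rw [← coeff_milnorQ q hjk, hD, coeff_zero]
  set ℓ : MvPolynomial (Fin n) (ZMod 2) :=
    ∑ j : Fin n, C (coeff (Finsupp.single j 2) q) * X j with hℓ
  have hhom : ℓ.IsHomogeneous 1 :=
    IsHomogeneous.sum _ _ _ (fun j _ => isHomogeneous_C_mul_X _ _)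
  refine ⟨ℓ, hhom, ?_⟩
  have hsq : ℓ ^ 2 = ∑ j : Fin n, C (coeff (Finsupp.single j 2) q) * X j ^ 2 := by
    rw [hℓ, sum_pow_char]
    refine Finset.sum_congr rfl fun j _ => ?_
    rw [mul_pow, ← map_pow]
    congr 1
    have : ∀ c : ZMod 2, c ^ 2 = c := by decide
    rw [this]
  rw [hsq]
  ext m
  rw [coeff_sum]
  have hco : ∀ j : Fin n,
      coeff m (C (coeff (Finsupp.single j 2) q) * X j ^ 2) =
        if Finsupp.single j 2 = m then coeff (Finsupp.single j 2) q else 0 := by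
    intro j
    rw [coeff_C_mul, coeff_X_pow]
    split <;> simp_all
  rw [Finset.sum_congr rfl (fun j _ => hco j)]
  by_cases hsqm : ∃ b : Fin n, m = Finsupp.single b 2
  · obtain ⟨b, rfl⟩ := hsqm
    rw [Finset.sum_eq_single_of_mem b (Finset.mem_univ b)]
    · rw [if_pos rfl]
    · intro c _ hcb
      rw [if_neg]
      intro h
      exact hcb ((Finsupp.single_left_injective (by norm_num)) h)
  · rw [Finset.sum_eq_zero (fun j _ => ?_)]
    · by_cases hd : m.degree = 2
      · rcases degree_two_classify m hd with ⟨b, rfl⟩ | ⟨a, b, hab, rfl⟩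
        · exact absurd ⟨b, rfl⟩ hsqm
        · exact hcross a b hab
      · exact hq.coeff_eq_zero hd
    · rw [if_neg]
      intro h
      exact hsqm ⟨j, h.symm⟩

theorem kernel_of_monomial_with_Milnor {n : ℕ}
    (q : MvPolynomial (Fin n) (ZMod 2)) (hq : q.IsHomogeneous 2)
    (e : ℕ) (s : Finset ℕ) (hs : s.Nonempty) (f : ℕ → ℕ) (hf : ∀ i ∈ s, 1 ≤ f i) :
    q ^ e * ∏ i ∈ s, (milnorQ n i q) ^ f i = 0 ↔
      ∃ ℓ : MvPolynomial (Fin n) (ZMod 2), ℓ.IsHomogeneous 1 ∧ q = ℓ ^ 2 := by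
  constructor
  · intro h
    rcases mul_eq_zero.1 h with h1 | h2
    · have hq0 : q = 0 := (pow_eq_zero_iff'.mp h1).1
      exact ⟨0, isHomogeneous_zero _ _ _, by rw [hq0]; ring⟩
    · obtain ⟨i, hi, hzi⟩ := Finset.prod_eq_zero_iff.1 h2
      have : milnorQ n i q = 0 := (pow_eq_zero_iff'.mp hzi).1
      exact core q hq this
  · rintro ⟨ℓ, hℓ, rfl⟩
    obtain ⟨i₀, hi₀⟩ := hs
    have hz : (milnorQ n i₀ (ℓ ^ 2)) ^ f i₀ = 0 := by
      rw [milnorQ_sq, zero_pow (by have := hf i₀ hi₀; omega)]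
    rw [Finset.prod_eq_zero hi₀ hz, mul_zero]
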